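/- Let n ≥ 2 and let P(x,y) = (1−|y|²)/(n ωₙ |x−y|ⁿ) be the Poisson kernel of the unit ball in ℝⁿ. Then for every s ∈ [0,1), sup over x ∈ ∂B₁(0) and y in the closed ball of radius s of |∇_y P(x,y)|/P(x,y) equals (n−1)/(1−s) + 1/(1+s), and this supremum is attained when y = s·x. -/

import Mathlib

open MeasureTheory Metric Filter
open scoped Topology RealInnerProductSpace

set_option maxHeartbeats 1000000

noncomputable section

/-- `ωₙ`, the Lebesgue volume of the unit ball in `ℝⁿ`. -/
def omegaN (n : ℕ) : ℝ := (volume (ball (0 : EuclideanSpace ℝ (Fin n)) 1)).toReal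

/-- The Poisson kernel of the unit ball in `ℝⁿ`. -/
def poisson (n : ℕ) (x y : EuclideanSpace ℝ (Fin n)) : ℝ :=
  (1 - ‖y‖ ^ 2) / (n * omegaN n * ‖x - y‖ ^ n)

lemma omegaN_pos (n : ℕ) : 0 < omegaN n := by
  rw [omegaN, ENNReal.toReal_pos_iff]
  exact ⟨measure_ball_pos _ _ one_pos, measure_ball_lt_top⟩

lemma rpow_norm_neg_n {m : ℝ} (hm : 0 < m) (n : ℕ) :
    (m ^ 2) ^ (-(n:ℝ)/2) = (m ^ n)⁻¹ := by
  rw [← Real.rpow_natCast m 2, ← Real.rpow_mul hm.le]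
  rw [show ((2:ℕ):ℝ) * (-(n:ℝ)/2) = -(n:ℝ) by push_cast; ring, Real.rpow_neg hm.le,
    Real.rpow_natCast]

lemma rpow_norm_neg_n' {m : ℝ} (hm : 0 < m) (n : ℕ) :
    (m ^ 2) ^ (-(n:ℝ)/2 - 1) = (m ^ n * m ^ 2)⁻¹ := by
  rw [← Real.rpow_natCast m 2, ← Real.rpow_mul hm.le]
  rw [show ((2:ℕ):ℝ) * (-(n:ℝ)/2 - 1) = -((n:ℝ) + 2) by push_cast; ring, Real.rpow_neg hm.le,
    show ((n:ℝ) + 2) = ((n + 2 : ℕ) : ℝ) by push_cast; ring, Real.rpow_natCast, pow_add,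
    Real.rpow_natCast]

lemma hasGradient_poisson {n : ℕ} (hn : 2 ≤ n) (x y : EuclideanSpace ℝ (Fin n))
    (hx : ‖x‖ = 1) (hy : ‖y‖ < 1) :
    HasGradientAt (fun z => poisson n x z)
      (poisson n x y • (((n : ℝ) / ‖x - y‖ ^ 2) • (x - y) - (2 / (1 - ‖y‖ ^ 2)) • y)) y := by
  have hxy : x ≠ y := by
    intro h
    rw [h] at hx
    exact absurd hx hy.ne
  have hm : (0:ℝ) < ‖x - y‖ := by rw [norm_pos_iff, sub_ne_zero]; exact hxy
  have hm2 : (0:ℝ) < ‖x - y‖ ^ 2 := by positivity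
  have hq : (0:ℝ) < 1 - ‖y‖ ^ 2 := by nlinarith [norm_nonneg y]
  have hω := omegaN_pos n
  have hn0 : (0:ℝ) < (n:ℝ) := by positivity
  have h1 : HasFDerivAt (fun z : EuclideanSpace ℝ (Fin n) => ‖z‖ ^ 2)
      ((2:ℕ) • (innerSL ℝ y)) y := by
    simpa using (hasFDerivAt_id y).norm_sq
  have h2 : HasFDerivAt (fun z : EuclideanSpace ℝ (Fin n) => 1 - ‖z‖ ^ 2)
      (-((2:ℕ) • (innerSL ℝ y))) y := h1.const_sub 1
  have h3 : HasFDerivAt (fun z : EuclideanSpace ℝ (Fin n) => ‖x - z‖ ^ 2)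
      (-((2:ℕ) • (innerSL ℝ (x - y)))) y := by
    have := ((hasFDerivAt_id y).const_sub x).norm_sq
    refine this.congr_fderiv ?_
    ext z
    simp
    ring
  have h4 : HasFDerivAt (fun z : EuclideanSpace ℝ (Fin n) => (‖x - z‖ ^ 2) ^ (-(n:ℝ)/2))
      ((-(n:ℝ)/2 * (‖x - y‖ ^ 2) ^ (-(n:ℝ)/2 - 1)) • (-((2:ℕ) • (innerSL ℝ (x - y))))) y :=
    ((Real.hasDerivAt_rpow_const (p := -(n:ℝ)/2) (Or.inl hm2.ne')).comp_hasFDerivAt y h3 :)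
  have h5 := (h2.mul h4).const_mul (((n:ℝ) * omegaN n)⁻¹)
  have hfun : (fun z => poisson n x z)
      = fun z : EuclideanSpace ℝ (Fin n) =>
          ((n:ℝ) * omegaN n)⁻¹ * ((1 - ‖z‖ ^ 2) * (‖x - z‖ ^ 2) ^ (-(n:ℝ)/2)) := by
    funext z
    rw [poisson]
    rcases eq_or_ne (‖x - z‖) 0 with h | h
    · have hn' : (-(n:ℝ)/2) ≠ 0 := by
        intro hc; rw [div_eq_zero_iff] at hc
        rcases hc with hc | hc <;> nlinarith
      rw [h]
      rw [show ((0:ℝ)^2) = 0 by ring, Real.zero_rpow hn', zero_pow (by omega)]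
      ring
    · have hpos : (0:ℝ) < ‖x - z‖ := lt_of_le_of_ne (norm_nonneg _) (Ne.symm h)
      rw [rpow_norm_neg_n hpos]
      field_simp
  rw [hasGradientAt_iff_hasFDerivAt, hfun]
  refine h5.congr_fderiv ?_
  symm
  ext z
  rw [InnerProductSpace.toDual_apply_apply]
  simp only [ContinuousLinearMap.add_apply, ContinuousLinearMap.smul_apply,
    ContinuousLinearMap.neg_apply, innerSL_apply_apply, smul_eq_mul,
    inner_smul_left, inner_sub_left, RCLike.inner_apply, conj_trivial]
  rw [rpow_norm_neg_n hm, rpow_norm_neg_n' hm, poisson]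
  have hd : ((n:ℝ) * omegaN n * ‖x - y‖ ^ n) ≠ 0 := by positivity
  field_simp
  ring

lemma norm_w_sq {F : Type*} [NormedAddCommGroup F] [InnerProductSpace ℝ F]
    (n : ℕ) (x y : F) (hx : ‖x‖ = 1) (hy : ‖y‖ < 1) (hxy : x ≠ y) :
    ‖((n : ℝ) / ‖x - y‖ ^ 2) • (x - y) - (2 / (1 - ‖y‖ ^ 2)) • y‖ ^ 2
      = (n:ℝ) * ((n:ℝ) - 2) / ‖x - y‖ ^ 2 + 4 * ‖y‖ ^ 2 / (1 - ‖y‖ ^ 2) ^ 2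
        + 2 * (n:ℝ) / (1 - ‖y‖ ^ 2) := by
  have hm : (0:ℝ) < ‖x - y‖ := by rw [norm_pos_iff, sub_ne_zero]; exact hxy
  have hq : (0:ℝ) < 1 - ‖y‖ ^ 2 := by nlinarith [norm_nonneg y]
  have rel : ‖x - y‖ ^ 2 = 1 - 2 * ⟪y, x⟫ + ‖y‖ ^ 2 := by
    rw [norm_sub_sq_real, hx, real_inner_comm]; ring
  have expand : ∀ a b : ℝ, ⟪a • (x - y) - b • y, a • (x - y) - b • y⟫
      = a ^ 2 * ‖x - y‖ ^ 2 - 2 * a * b * (⟪y, x⟫ - ‖y‖ ^ 2) + b ^ 2 * ‖y‖ ^ 2 := by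
    intro a b
    simp only [inner_sub_left, inner_sub_right, real_inner_smul_left, real_inner_smul_right,
      real_inner_self_eq_norm_sq, norm_smul, Real.norm_eq_abs, mul_pow, sq_abs]
    rw [real_inner_comm x y]
    ring
  rw [← real_inner_self_eq_norm_sq, expand, rel]
  have h1 : (0:ℝ) < 1 - 2 * ⟪y, x⟫ + ‖y‖ ^ 2 := by rw [← rel]; positivity
  field_simp
  ring

lemma scalar_bound {n : ℕ} (hn : 2 ≤ n) {s q m2 : ℝ} (hs0 : 0 ≤ s) (hs1 : s < 1)
    (hqs : q ≤ s ^ 2) (hm2 : (1 - s) ^ 2 ≤ m2) :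
    (n:ℝ) * ((n:ℝ) - 2) / m2 + 4 * q / (1 - q) ^ 2 + 2 * (n:ℝ) / (1 - q)
      ≤ (((n:ℝ) - 1) / (1 - s) + 1 / (1 + s)) ^ 2 := by
  have hN : (2:ℝ) ≤ (n:ℝ) := by exact_mod_cast hn
  have hs1' : (0:ℝ) < 1 - s := by linarith
  have hm2pos : (0:ℝ) < m2 := lt_of_lt_of_le (by positivity) hm2
  have hq1 : q < 1 := lt_of_le_of_lt hqs (by nlinarith)
  have hq1' : (0:ℝ) < 1 - q := by linarith
  have hqs' : 1 - s ^ 2 ≤ 1 - q := by linarith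
  have hs2 : (0:ℝ) < 1 - s ^ 2 := by nlinarith
  have key : (((n:ℝ) - 1) / (1 - s) + 1 / (1 + s)) ^ 2
      = (n:ℝ) * ((n:ℝ) - 2) / (1 - s) ^ 2 + 4 * s ^ 2 / (1 - s ^ 2) ^ 2
        + 2 * (n:ℝ) / (1 - s ^ 2) := by
    have h1 : (0:ℝ) < 1 + s := by linarith
    field_simp
    ring
  rw [key]
  have t1 : (n:ℝ) * ((n:ℝ) - 2) / m2 ≤ (n:ℝ) * ((n:ℝ) - 2) / (1 - s) ^ 2 :=
    div_le_div_of_nonneg_left (by nlinarith) (by positivity) hm2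
  have t2 : 4 * q / (1 - q) ^ 2 ≤ 4 * s ^ 2 / (1 - s ^ 2) ^ 2 := by
    rw [div_le_div_iff₀ (by positivity) (by positivity)]
    have hA : (1 - s ^ 2) ^ 2 ≤ (1 - q) ^ 2 := by nlinarith
    nlinarith [mul_le_mul_of_nonneg_right hqs (sq_nonneg (1 - s ^ 2)),
      mul_le_mul_of_nonneg_left hA (sq_nonneg s)]
  have t3 : 2 * (n:ℝ) / (1 - q) ≤ 2 * (n:ℝ) / (1 - s ^ 2) :=
    div_le_div_of_nonneg_left (by positivity) hs2 hqs'
  linarith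

lemma poisson_pos {n : ℕ} (hn : 2 ≤ n) (x y : EuclideanSpace ℝ (Fin n))
    (hx : ‖x‖ = 1) (hy : ‖y‖ < 1) : 0 < poisson n x y := by
  have hxy : x ≠ y := by
    intro h; rw [h] at hx; exact absurd hx hy.ne
  have hm : (0:ℝ) < ‖x - y‖ := by rw [norm_pos_iff, sub_ne_zero]; exact hxy
  have hq : (0:ℝ) < 1 - ‖y‖ ^ 2 := by nlinarith [norm_nonneg y]
  have hω := omegaN_pos n
  have hn0 : (0:ℝ) < (n:ℝ) := by positivity
  exact div_pos hq (by positivity)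

/-- The supremum over `x ∈ ∂B₁(0)` and `y ∈ B̄ₛ(0)` of the logarithmic gradient of the Poisson
kernel equals `(n−1)/(1−s) + 1/(1+s)`, attained at `y = s • x`. -/
theorem stmt3 {n : ℕ} (hn : 2 ≤ n) (s : ℝ) (hs0 : 0 ≤ s) (hs1 : s < 1) :
    (∀ x ∈ sphere (0 : EuclideanSpace ℝ (Fin n)) 1,
      ∀ y ∈ closedBall (0 : EuclideanSpace ℝ (Fin n)) s,
        ‖gradient (fun z => poisson n x z) y‖ / poisson n x y ≤
          ((n : ℝ) - 1) / (1 - s) + 1 / (1 + s)) ∧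
    (∀ x ∈ sphere (0 : EuclideanSpace ℝ (Fin n)) 1,
      ‖gradient (fun z => poisson n x z) (s • x)‖ / poisson n x (s • x) =
        ((n : ℝ) - 1) / (1 - s) + 1 / (1 + s)) := by
  have hN : (2:ℝ) ≤ (n:ℝ) := by exact_mod_cast hn
  have hs1' : (0:ℝ) < 1 - s := by linarith
  have hT : 0 ≤ ((n : ℝ) - 1) / (1 - s) + 1 / (1 + s) := by
    apply add_nonneg
    · apply div_nonneg (by linarith) (by linarith)
    · apply div_nonneg (by linarith) (by linarith)
  constructor
  · intro x hx y hy
    rw [mem_sphere_zero_iff_norm] at hx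
    rw [mem_closedBall_zero_iff] at hy
    have hylt : ‖y‖ < 1 := lt_of_le_of_lt hy hs1
    have hxy : x ≠ y := by
      intro h; rw [h] at hx; exact absurd hx hylt.ne
    have hP := poisson_pos hn x y hx hylt
    rw [(hasGradient_poisson hn x y hx hylt).gradient, norm_smul, Real.norm_of_nonneg hP.le,
      mul_comm, mul_div_assoc, div_self hP.ne', mul_one]
    set w := ((n : ℝ) / ‖x - y‖ ^ 2) • (x - y) - (2 / (1 - ‖y‖ ^ 2)) • y with hwdef
    have hm2 : (1 - s) ^ 2 ≤ ‖x - y‖ ^ 2 := by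
      have h1 : 1 - s ≤ ‖x - y‖ := by
        have := norm_sub_norm_le x y
        rw [hx] at this
        linarith
      have h2 : (0:ℝ) ≤ 1 - s := by linarith
      nlinarith [norm_nonneg (x - y)]
    have hsq : ‖w‖ ^ 2 ≤ (((n : ℝ) - 1) / (1 - s) + 1 / (1 + s)) ^ 2 := by
      rw [hwdef, norm_w_sq n x y hx hylt hxy]
      exact scalar_bound hn hs0 hs1 (by nlinarith [norm_nonneg y]) hm2
    calc ‖w‖ = Real.sqrt (‖w‖ ^ 2) := (Real.sqrt_sq (norm_nonneg w)).symm
      _ ≤ Real.sqrt ((((n : ℝ) - 1) / (1 - s) + 1 / (1 + s)) ^ 2) := Real.sqrt_le_sqrt hsq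
      _ = ((n : ℝ) - 1) / (1 - s) + 1 / (1 + s) := Real.sqrt_sq hT
  · intro x hx
    rw [mem_sphere_zero_iff_norm] at hx
    have hy : ‖s • x‖ = s := by
      rw [norm_smul, Real.norm_of_nonneg hs0, hx, mul_one]
    have hylt : ‖s • x‖ < 1 := by rw [hy]; exact hs1
    have hP := poisson_pos hn x (s • x) hx hylt
    rw [(hasGradient_poisson hn x (s • x) hx hylt).gradient, norm_smul,
      Real.norm_of_nonneg hP.le, mul_comm, mul_div_assoc, div_self hP.ne', mul_one]
    have hxs : x - s • x = (1 - s) • x := by rw [sub_smul, one_smul]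
    have hnx : ‖x - s • x‖ = 1 - s := by
      rw [hxs, norm_smul, Real.norm_of_nonneg hs1'.le, hx, mul_one]
    have hw : ((n : ℝ) / ‖x - s • x‖ ^ 2) • (x - s • x) - (2 / (1 - ‖s • x‖ ^ 2)) • (s • x)
        = (((n : ℝ) - 1) / (1 - s) + 1 / (1 + s)) • x := by
      rw [hnx, hy, hxs, smul_smul, smul_smul, ← sub_smul]
      congr 1
      have h1 : (0:ℝ) < 1 + s := by linarith
      have h2 : (0:ℝ) < 1 - s ^ 2 := by nlinarith
      field_simp
      ring
    rw [hw, norm_smul, Real.norm_of_nonneg hT, hx, mul_one]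

end
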